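/- Conversely, if A is a commutative associative unital k-algebra that is also a coalgebra with comultiplication Δ : A → A ⊗ A and counit ε : A → k, such that Δ is a map of A-bimodules, then A is a Frobenius algebra: the pairing (a,b) ↦ ε(ab) is nondegenerate and A is finite-dimensional. -/
import Mathlib


open TensorProduct

/-- If `A` is a commutative associative unital `k`-algebra which is also a
coassociative counital coalgebra, with comultiplication `Δ : A → A ⊗ A` and counit
`ε : A → k`, such that `Δ` is a map of `A`-bimodules
(`Δ(a·b) = (a ⊗ 1)·Δ(b) = Δ(a)·(1 ⊗ b)` for the outer bimodule structure on `A ⊗ A`),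
then `A` is a Frobenius algebra: the pairing `(a,b) ↦ ε (a·b)` is nondegenerate and `A`
is finite-dimensional. -/
theorem coalgebra_bimodule_implies_frobenius
    (k A : Type*) [Field k] [CommRing A] [Algebra k A]
    (Δ : A →ₗ[k] (A ⊗[k] A)) (ε : A →ₗ[k] k)
    -- coassociativity:
    (hcoassoc : ∀ a : A,
      (TensorProduct.assoc k A A A) ((TensorProduct.map Δ LinearMap.id) (Δ a))
        = (TensorProduct.map LinearMap.id Δ) (Δ a))
    -- counit laws:
    (hcounit_l : ∀ a : A, (TensorProduct.lid k A) ((TensorProduct.map ε LinearMap.id) (Δ a)) = a)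
    (hcounit_r : ∀ a : A, (TensorProduct.rid k A) ((TensorProduct.map LinearMap.id ε) (Δ a)) = a)
    -- Δ is a map of A-bimodules:
    (hbimod_l : ∀ a b : A,
      Δ (a * b) = (TensorProduct.map (LinearMap.mulLeft k a) LinearMap.id) (Δ b))
    (hbimod_r : ∀ a b : A,
      Δ (a * b) = (TensorProduct.map LinearMap.id (LinearMap.mulRight k b)) (Δ a)) :
    (∀ a : A, (∀ b : A, ε (a * b) = 0) → a = 0) ∧ FiniteDimensional k A := by
  classical
  -- Key identity: a = lid (map (ε ∘ mulLeft a) id (Δ 1))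
  have key : ∀ a : A,
      (TensorProduct.lid k A)
        ((TensorProduct.map (ε ∘ₗ LinearMap.mulLeft k a) LinearMap.id) (Δ 1)) = a := by
    intro a
    have h1 : (TensorProduct.map (ε ∘ₗ LinearMap.mulLeft k a) (LinearMap.id : A →ₗ[k] A))
        = (TensorProduct.map ε (LinearMap.id : A →ₗ[k] A)) ∘ₗ
          (TensorProduct.map (LinearMap.mulLeft k a) (LinearMap.id : A →ₗ[k] A)) := by
      refine TensorProduct.ext' fun x y => ?_
      simp
    rw [h1]
    have h2 : (TensorProduct.map (LinearMap.mulLeft k a) LinearMap.id) (Δ 1) = Δ a := by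
      rw [← hbimod_l a 1, mul_one]
    simp only [LinearMap.comp_apply, h2, hcounit_l]
  constructor
  · intro a ha
    have hz : (ε ∘ₗ LinearMap.mulLeft k a) = 0 := by
      ext b; simpa using ha b
    have := key a
    rw [hz] at this
    simpa using this.symm
  · obtain ⟨S, hS⟩ := TensorProduct.exists_finset (Δ 1)
    have hspan : (⊤ : Submodule k A) ≤ Submodule.span k (↑(S.image Prod.snd)) := by
      intro a _
      rw [← key a, hS, map_sum, map_sum]
      refine Submodule.sum_mem _ fun p hp => ?_
      simp only [TensorProduct.map_tmul, LinearMap.id_coe, id_eq, TensorProduct.lid_tmul]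
      exact Submodule.smul_mem _ _ (Submodule.subset_span
        (Finset.mem_coe.mpr (Finset.mem_image_of_mem Prod.snd hp)))
    exact Module.finite_def.mpr ⟨S.image Prod.snd, le_antisymm le_top hspan⟩
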